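/- Let a < b, r, k ∈ ℝ, and let μ, π : (a,b) → ℝ be differentiable, σ : (a,b) → ℝ with σ(x) > 0. Let φ, F : (a,b) → ℝ be twice differentiable and satisfy (σ(x)²/2)φ″(x) + μ(x)φ′(x) − rφ(x) = 0 and (σ(x)²/2)F″(x) + μ(x)F′(x) − rF(x) + π(x) = 0 for all x ∈ (a,b), with φ′(x) ≠ 0 for all x. Let S : (a,b) → ℝ be differentiable with S(x) > 0 and S′(x) = −(2μ(x)/σ(x)²)·S(x). Define ρ(x) := π(x) + k(μ(x) − r x), I(x) := (F′(x) − k)/φ′(x), and L(x) := σ(x)²·φ′(x)²·I′(x)/(2·S(x)). Then L is differentiable on (a,b) and L′(x) = −ρ′(x)·φ′(x)/S(x) for all x ∈ (a,b). -/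

import Mathlib

open Set

/-- Key differential identity in the proof of Lemma 4: `L′ = −ρ′ φ′ / S`. -/
theorem stmt5 (a b r k : ℝ) (hab : a < b)
    (μ μ' π π' σ φ φ' φ'' F F' F'' S I' : ℝ → ℝ)
    (hμ : ∀ x ∈ Set.Ioo a b, HasDerivAt μ (μ' x) x)
    (hπ : ∀ x ∈ Set.Ioo a b, HasDerivAt π (π' x) x)
    (hσ : ∀ x ∈ Set.Ioo a b, 0 < σ x)
    (hφ : ∀ x ∈ Set.Ioo a b, HasDerivAt φ (φ' x) x)
    (hφ2 : ∀ x ∈ Set.Ioo a b, HasDerivAt φ' (φ'' x) x)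
    (hF : ∀ x ∈ Set.Ioo a b, HasDerivAt F (F' x) x)
    (hF2 : ∀ x ∈ Set.Ioo a b, HasDerivAt F' (F'' x) x)
    (hODEφ : ∀ x ∈ Set.Ioo a b, σ x ^ 2 / 2 * φ'' x + μ x * φ' x - r * φ x = 0)
    (hODEF : ∀ x ∈ Set.Ioo a b,
      σ x ^ 2 / 2 * F'' x + μ x * F' x - r * F x + π x = 0)
    (hφ'ne : ∀ x ∈ Set.Ioo a b, φ' x ≠ 0)
    (hSpos : ∀ x ∈ Set.Ioo a b, 0 < S x)
    (hS' : ∀ x ∈ Set.Ioo a b, HasDerivAt S (-(2 * μ x / σ x ^ 2) * S x) x)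
    (hI' : ∀ x ∈ Set.Ioo a b, HasDerivAt (fun y => (F' y - k) / φ' y) (I' x) x)
    (L : ℝ → ℝ)
    (hL : ∀ x, L x = σ x ^ 2 * (φ' x) ^ 2 * I' x / (2 * S x)) :
    ∀ x ∈ Set.Ioo a b,
      HasDerivAt L (-(π' x + k * (μ' x - r)) * φ' x / S x) x := by
  intro x hx
  set N : ℝ → ℝ := fun y =>
    r * (F y * φ' y - φ y * F' y) - π y * φ' y + k * (r * φ y - μ y * φ' y) with hN
  -- On Ioo a b, L agrees with N / S
  have hLN : ∀ y ∈ Set.Ioo a b, L y = N y / S y := by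
    intro y hy
    have hdiv : HasDerivAt (fun z => (F' z - k) / φ' z)
        ((F'' y * φ' y - (F' y - k) * φ'' y) / (φ' y) ^ 2) y :=
      ((hF2 y hy).sub_const k).div (hφ2 y hy) (hφ'ne y hy)
    have hIval : I' y = (F'' y * φ' y - (F' y - k) * φ'' y) / (φ' y) ^ 2 :=
      (hI' y hy).unique hdiv
    have e1 := hODEφ y hy
    have e2 := hODEF y hy
    have hσne : σ y ≠ 0 := ne_of_gt (hσ y hy)
    have hSne : S y ≠ 0 := ne_of_gt (hSpos y hy)
    have hkey : σ y ^ 2 / 2 * (F'' y * φ' y - (F' y - k) * φ'' y) = N y := by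
      simp only [hN]
      linear_combination φ' y * e2 - (F' y - k) * e1
    have hL2 : L y = (σ y ^ 2 / 2 * (F'' y * φ' y - (F' y - k) * φ'' y)) / S y := by
      have hφne : φ' y ≠ 0 := hφ'ne y hy
      rw [hL y, hIval]
      field_simp
    rw [hL2, hkey]
  have hmem : Set.Ioo a b ∈ nhds x := isOpen_Ioo.mem_nhds hx
  have hS'x := hS' x hx
  have hSne : S x ≠ 0 := ne_of_gt (hSpos x hx)
  have hσne : σ x ≠ 0 := ne_of_gt (hσ x hx)
  have hNder : HasDerivAt N
      (r * ((F' x * φ' x + F x * φ'' x) - (φ' x * F' x + φ x * F'' x))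
        - (π' x * φ' x + π x * φ'' x)
        + k * (r * φ' x - (μ' x * φ' x + μ x * φ'' x))) x := by
    exact ((((hF x hx).mul (hφ2 x hx)).sub ((hφ x hx).mul (hF2 x hx))).const_mul r).sub
      ((hπ x hx).mul (hφ2 x hx)) |>.add
      ((((hφ x hx).const_mul r).sub ((hμ x hx).mul (hφ2 x hx))).const_mul k)
  have hder := hNder.div hS'x hSne
  have key : (r * ((F' x * φ' x + F x * φ'' x) - (φ' x * F' x + φ x * F'' x))
        - (π' x * φ' x + π x * φ'' x)
        + k * (r * φ' x - (μ' x * φ' x + μ x * φ'' x))) * S x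
        - N x * (-(2 * μ x / σ x ^ 2) * S x)
      = (-(π' x + k * (μ' x - r)) * φ' x / S x) * S x ^ 2 := by
    have e1 := hODEφ x hx
    have e2 := hODEF x hx
    have hσ2 : σ x ^ 2 ≠ 0 := pow_ne_zero 2 hσne
    simp only [hN]
    field_simp
    linear_combination (2 * (r * F x - π x - k * μ x)) * e1
      - (2 * r * φ x) * e2
  rw [key] at hder
  have hfinal : HasDerivAt (fun y => N y / S y)
      (-(π' x + k * (μ' x - r)) * φ' x / S x) x := by
    refine hder.congr_deriv ?_
    field_simp
  exact hfinal.congr_of_eventuallyEq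
    (Filter.eventuallyEq_of_mem hmem fun y hy => hLN y hy)
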